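/- Let a, b be pseudo Drazin invertible elements of a Banach algebra with ab = λ ba, λ ≠ 0, and let a^Π = 1 − a a^‡. Then 1 + b^‡ a a^Π is invertible in A, with inverse given by the norm-convergent series Σ_{i=0}^∞ (−b^‡ a a^Π)^i. -/

import Mathlib

/-- Membership in the Jacobson radical of a ring. -/
def MemJacobson {A : Type*} [Ring A] (x : A) : Prop := ∀ y : A, IsUnit (1 - y * x)

/-- `b` is a pseudo Drazin inverse of `a`. -/
def IsPDrazinInv {A : Type*} [Ring A] (a b : A) : Prop :=
  a * b = b * a ∧ b * a * b = b ∧ ∃ k : ℕ, 1 ≤ k ∧ MemJacobson (a ^ k - a ^ (k + 1) * b)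

section Aux

variable {A : Type*} [Ring A]

/-- Jacobson's lemma. -/
theorem jacSwap {x y : A} (h : IsUnit (1 - x * y)) : IsUnit (1 - y * x) := by
  obtain ⟨u, hu⟩ := h
  set w : A := ↑u⁻¹ with hw
  have h1 : (1 - x * y) * w = 1 := by rw [← hu]; exact u.mul_inv
  have h2 : w * (1 - x * y) = 1 := by rw [← hu]; exact u.inv_mul
  have e1 : x * y * w = w - 1 := by
    have h3 : w - x * y * w = 1 := by rw [sub_mul, one_mul] at h1; exact h1
    rw [← h3]; abel
  have e2 : w * (x * y) = w - 1 := by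
    have h3 : w - w * (x * y) = 1 := by rw [mul_sub, mul_one] at h2; exact h2
    rw [← h3]; abel
  refine ⟨⟨1 - y * x, 1 + y * w * x, ?_, ?_⟩, rfl⟩
  · calc (1 - y * x) * (1 + y * w * x)
        = 1 + y * w * x - y * x - y * (x * y * w) * x := by noncomm_ring
      _ = 1 + y * w * x - y * x - y * (w - 1) * x := by rw [e1]
      _ = 1 := by noncomm_ring
  · calc (1 + y * w * x) * (1 - y * x)
        = 1 + y * w * x - y * x - y * (w * (x * y)) * x := by noncomm_ring
      _ = 1 + y * w * x - y * x - y * (w - 1) * x := by rw [e2]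
      _ = 1 := by noncomm_ring

theorem MemJacobson.mul_left {x : A} (hx : MemJacobson x) (z : A) :
    MemJacobson (z * x) := fun y => by
  have := hx (y * z); rwa [mul_assoc] at this

theorem MemJacobson.mul_right {x : A} (hx : MemJacobson x) (z : A) :
    MemJacobson (x * z) := fun y => by
  have h1 : IsUnit (1 - z * (y * x)) := by rw [← mul_assoc]; exact hx (z * y)
  have h2 := jacSwap h1
  rwa [mul_assoc] at h2

theorem MemJacobson.zero : MemJacobson (0 : A) := fun y => by simp

theorem MemJacobson.add {x y : A} (hx : MemJacobson x) (hy : MemJacobson y) :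
    MemJacobson (x + y) := fun z => by
  obtain ⟨u, hu⟩ := hx z
  have h2 : IsUnit (1 - (↑u⁻¹ * z) * y) := hy (↑u⁻¹ * z)
  have huu : (↑u : A) * ↑u⁻¹ = 1 := u.mul_inv
  have key : (↑u : A) * (1 - (↑u⁻¹ * z) * y) = 1 - z * (x + y) := by
    calc (↑u : A) * (1 - (↑u⁻¹ * z) * y) = ↑u - (↑u * ↑u⁻¹) * (z * y) := by noncomm_ring
      _ = ↑u - z * y := by rw [huu, one_mul]
      _ = (1 - z * x) - z * y := by rw [hu]
      _ = 1 - z * (x + y) := by noncomm_ring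
  rw [← key]; exact u.isUnit.mul h2

theorem MemJacobson.neg {x : A} (hx : MemJacobson x) : MemJacobson (-x) := by
  have := hx.mul_right (-1); rwa [mul_neg_one] at this

theorem MemJacobson.smul' [Algebra ℂ A] (c : ℂ) {x : A} (hx : MemJacobson x) :
    MemJacobson (c • x) := fun y => by
  have := hx (c • y)
  rw [mul_smul_comm]
  rwa [smul_mul_assoc] at this

/-- `Jr x y` : `x` and `y` agree modulo the Jacobson radical. -/
def Jr (x y : A) : Prop := MemJacobson (x - y)

theorem Jr.of_eq {x y : A} (h : x = y) : Jr x y := by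
  unfold Jr; rw [h, sub_self]; exact MemJacobson.zero

theorem Jr.refl (x : A) : Jr x x := Jr.of_eq rfl

theorem Jr.symm {x y : A} (h : Jr x y) : Jr y x := by
  have := MemJacobson.neg h; rwa [neg_sub] at this

theorem Jr.trans {x y z : A} (h1 : Jr x y) (h2 : Jr y z) : Jr x z := by
  have := MemJacobson.add h1 h2; rwa [sub_add_sub_cancel] at this

theorem Jr.mulL (c : A) {x y : A} (h : Jr x y) : Jr (c * x) (c * y) := by
  have := MemJacobson.mul_left h c
  unfold Jr; rwa [mul_sub] at this

theorem Jr.mulR (c : A) {x y : A} (h : Jr x y) : Jr (x * c) (y * c) := by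
  have := MemJacobson.mul_right h c
  unfold Jr; rwa [sub_mul] at this

theorem Jr.smul [Algebra ℂ A] (c : ℂ) {x y : A} (h : Jr x y) : Jr (c • x) (c • y) := by
  have := MemJacobson.smul' c h
  unfold Jr; rwa [smul_sub] at this

theorem Jr.subL (c : A) {x y : A} (h : Jr x y) : Jr (c - x) (c - y) := by
  have h2 : (c - x) - (c - y) = y - x := by abel
  unfold Jr; rw [h2]; exact h.symm

instance : Trans (Jr (A := A)) (Jr (A := A)) (Jr (A := A)) := ⟨Jr.trans⟩
instance : Trans (Eq (α := A)) (Jr (A := A)) (Jr (A := A)) := ⟨fun h1 h2 => h1 ▸ h2⟩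
instance : Trans (Jr (A := A)) (Eq (α := A)) (Jr (A := A)) := ⟨fun h1 h2 => h2 ▸ h1⟩

local infix:50 " ≋ " => Jr

theorem isUnit_of_both {d s : A} (h1 : IsUnit (s * d)) (h2 : IsUnit (d * s)) : IsUnit d := by
  obtain ⟨u, hu⟩ := h1
  obtain ⟨v, hv⟩ := h2
  have hr : d * (s * ↑v⁻¹) = 1 := by rw [← mul_assoc, ← hv]; exact v.mul_inv
  have hl : (↑u⁻¹ * s) * d = 1 := by rw [mul_assoc, ← hu]; exact u.inv_mul
  have heq : (↑u⁻¹ * s : A) = s * ↑v⁻¹ := by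
    calc (↑u⁻¹ * s : A) = (↑u⁻¹ * s) * (d * (s * ↑v⁻¹)) := by rw [hr, mul_one]
      _ = ((↑u⁻¹ * s) * d) * (s * ↑v⁻¹) := by simp only [mul_assoc]
      _ = s * ↑v⁻¹ := by rw [hl, one_mul]
  exact ⟨⟨d, s * ↑v⁻¹, hr, by rw [← heq]; exact hl⟩, rfl⟩

variable [Algebra ℂ A]

theorem keyM (b bd x : A) (μ : ℂ) (hμ : μ ≠ 0)
    (hc : b * bd = bd * b) (hi : bd * b * bd = bd) (m : ℕ) (hm1 : 1 ≤ m)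
    (hm : MemJacobson (b ^ m - b ^ (m + 1) * bd))
    (hx : Jr (x * b) (μ • (b * x))) :
    Jr (x * (b * bd)) ((b * bd) * x) ∧ Jr (bd * x) (μ • (x * bd)) := by
  obtain ⟨n, rfl⟩ : ∃ n, m = n + 1 := ⟨m - 1, by omega⟩
  obtain ⟨e, he⟩ : ∃ e : A, e = b * bd := ⟨_, rfl⟩
  have hcomm : Commute b bd := hc
  have heebd : (b * bd) * (b * bd) = b * bd := by
    have h1 : (b * bd) * (b * bd) = b * (bd * b * bd) := by noncomm_ring
    rw [h1, hi]
  have hee : e * e = e := by rw [he]; exact heebd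
  have hide : IsIdempotentElem e := hee
  have hpow : ∀ j : ℕ, bd ^ j * b ^ j = e ^ j := fun j => by
    rw [he, ← (hcomm.symm).mul_pow, hc]
  have hpowe : ∀ j : ℕ, 1 ≤ j → bd ^ j * b ^ j = e := fun j hj => by
    obtain ⟨i, rfl⟩ : ∃ i, j = i + 1 := ⟨j - 1, by omega⟩
    rw [hpow]
    exact IsIdempotentElem.pow_succ_eq i hide
  have hpowe' : ∀ j : ℕ, 1 ≤ j → b ^ j * bd ^ j = e := fun j hj => by
    obtain ⟨i, rfl⟩ : ∃ i, j = i + 1 := ⟨j - 1, by omega⟩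
    rw [he, ← hcomm.mul_pow]
    exact IsIdempotentElem.pow_succ_eq i heebd
  have hbd_e : bd * e = bd := by rw [he, ← mul_assoc, hi]
  have he_bd : e * bd = bd := by rw [he, hc]; exact hi
  have he_b : e * b = b * e := by rw [he, mul_assoc, ← hc]
  -- S0
  have S0 : ∀ i : ℕ, Jr (x * b ^ i) (μ ^ i • (b ^ i * x)) := by
    intro i; induction i with
    | zero => exact Jr.of_eq (by simp)
    | succ j ih =>
      calc x * b ^ (j + 1) = (x * b ^ j) * b := by rw [pow_succ, ← mul_assoc]
        _ ≋ (μ ^ j • (b ^ j * x)) * b := ih.mulR b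
        _ = μ ^ j • (b ^ j * (x * b)) := by rw [smul_mul_assoc, mul_assoc]
        _ ≋ μ ^ j • (b ^ j * (μ • (b * x))) := (Jr.mulL (b ^ j) hx).smul (μ ^ j)
        _ = μ ^ (j + 1) • (b ^ (j + 1) * x) := by
            rw [mul_smul_comm, smul_smul, ← pow_succ, pow_succ b j]
            rw [mul_assoc]
  have hmJr : Jr (b ^ (n + 1)) (b ^ (n + 2) * bd) := hm
  -- S1
  have S1 : ∀ j : ℕ, Jr (b ^ (n + 1)) (b ^ (n + 1 + j) * bd ^ j) := by
    intro j; induction j with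
    | zero => exact Jr.of_eq (by simp)
    | succ i ih =>
      refine ih.trans ?_
      have h1 : Jr (b ^ (n + 1 + i)) (b ^ (n + 2 + i) * bd) := by
        have h2 := hmJr.mulL (b ^ i)
        refine (Jr.of_eq ?_).trans (h2.trans (Jr.of_eq ?_))
        · rw [← pow_add]; congr 1 <;> omega
        · rw [← mul_assoc, ← pow_add]; congr 2 <;> omega
      have h2 := h1.mulR (bd ^ i)
      refine h2.trans (Jr.of_eq ?_)
      rw [mul_assoc, ← pow_succ']
      congr 2 <;> omega
  -- S2
  have S2 : Jr (b ^ (n + 1) * x) (μ • (b ^ (n + 2) * x * bd)) := by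
    have a1 : Jr (b ^ (n + 1) * x) ((μ ^ (n + 1))⁻¹ • (x * b ^ (n + 1))) := by
      have h2 := ((S0 (n + 1)).symm).smul ((μ ^ (n + 1))⁻¹)
      refine (Jr.of_eq ?_).trans h2
      rw [inv_smul_smul₀ (pow_ne_zero _ hμ)]
    have a2 : Jr (x * b ^ (n + 1)) (x * (b ^ (n + 2) * bd)) := by
      have h2 := (S1 1).mulL x
      refine h2.trans (Jr.of_eq ?_)
      rw [pow_one]
    have a3 : Jr (x * b ^ (n + 2) * bd) ((μ ^ (n + 2) • (b ^ (n + 2) * x)) * bd) :=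
      (S0 (n + 2)).mulR bd
    calc b ^ (n + 1) * x ≋ (μ ^ (n + 1))⁻¹ • (x * b ^ (n + 1)) := a1
      _ ≋ (μ ^ (n + 1))⁻¹ • (x * (b ^ (n + 2) * bd)) := a2.smul _
      _ = (μ ^ (n + 1))⁻¹ • (x * b ^ (n + 2) * bd) := by rw [mul_assoc]
      _ ≋ (μ ^ (n + 1))⁻¹ • ((μ ^ (n + 2) • (b ^ (n + 2) * x)) * bd) := a3.smul _
      _ = μ • (b ^ (n + 2) * x * bd) := by
          rw [smul_mul_assoc, smul_smul, pow_succ μ (n + 1),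
            inv_mul_cancel_left₀ (pow_ne_zero _ hμ)]
  -- S3
  have S3 : Jr (bd * x) (μ • (e * (x * bd))) := by
    have h1 := S2.mulL (bd ^ (n + 2))
    refine (Jr.of_eq ?_).trans (h1.trans (Jr.of_eq ?_))
    · have h3 : bd ^ (n + 2) * b ^ (n + 1) = bd := by
        rw [pow_succ' bd (n + 1), mul_assoc, hpowe (n + 1) (by omega), hbd_e]
      rw [← mul_assoc, h3]
    · rw [mul_smul_comm]
      congr 1
      have h4 : bd ^ (n + 2) * b ^ (n + 2) = e := hpowe (n + 2) (by omega)
      calc bd ^ (n + 2) * (b ^ (n + 2) * x * bd)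
          = (bd ^ (n + 2) * b ^ (n + 2)) * (x * bd) := by simp only [mul_assoc]
        _ = e * (x * bd) := by rw [h4]
  -- S4
  have S4 : ∀ j : ℕ, Jr (bd ^ (j + 1) * x) (μ ^ (j + 1) • (e * (x * bd ^ (j + 1)))) := by
    intro j; induction j with
    | zero =>
      refine (Jr.of_eq (by rw [pow_one])).trans (S3.trans (Jr.of_eq (by simp)))
    | succ i ih =>
      calc bd ^ (i + 2) * x = bd * (bd ^ (i + 1) * x) := by rw [pow_succ' bd (i + 1), mul_assoc]
        _ ≋ bd * (μ ^ (i + 1) • (e * (x * bd ^ (i + 1)))) := ih.mulL bd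
        _ = μ ^ (i + 1) • (bd * x * bd ^ (i + 1)) := by
            rw [mul_smul_comm]; congr 1
            rw [← mul_assoc, hbd_e, ← mul_assoc]
        _ ≋ μ ^ (i + 1) • ((μ • (e * (x * bd))) * bd ^ (i + 1)) := (S3.mulR _).smul _
        _ = μ ^ (i + 2) • (e * (x * bd ^ (i + 2))) := by
            rw [smul_mul_assoc, smul_smul, ← pow_succ, pow_succ' bd (i + 1)]
            congr 1
            simp only [mul_assoc]
  -- S5
  have S5 : Jr (e * x) (μ • (b * ((e * x) * bd))) := by
    have h1 := S2.mulL (bd ^ (n + 1))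
    refine (Jr.of_eq ?_).trans (h1.trans (Jr.of_eq ?_))
    · rw [← mul_assoc, hpowe (n + 1) (by omega)]
    · rw [mul_smul_comm]; congr 1
      have h3 : bd ^ (n + 1) * b ^ (n + 2) = b * e := by
        rw [pow_succ b (n + 1), ← mul_assoc, hpowe (n + 1) (by omega), he_b]
      calc bd ^ (n + 1) * (b ^ (n + 2) * x * bd)
          = (bd ^ (n + 1) * b ^ (n + 2)) * (x * bd) := by simp only [mul_assoc]
        _ = (b * e) * (x * bd) := by rw [h3]
        _ = b * ((e * x) * bd) := by simp only [mul_assoc]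
  -- S6
  have S6 : ∀ j : ℕ, Jr (e * x) (μ ^ j • (b ^ j * ((e * x) * bd ^ j))) := by
    intro j; induction j with
    | zero => exact Jr.of_eq (by simp)
    | succ i ih =>
      refine ih.trans ?_
      have h1 := (((S5.mulR (bd ^ i)).mulL (b ^ i)).smul (μ ^ i))
      refine h1.trans (Jr.of_eq ?_)
      rw [pow_succ μ i, pow_succ b i, pow_succ' bd i]
      simp only [smul_mul_assoc, mul_smul_comm, smul_smul, mul_assoc]
  -- S7
  have S7 : Jr (x * e) (e * x) := by
    have c6 := S6 ((n + 1) + (n + 1))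
    calc x * e = (x * b ^ (n + 1)) * bd ^ (n + 1) := by
          rw [mul_assoc, hpowe' (n + 1) (by omega)]
      _ ≋ (μ ^ (n + 1) • (b ^ (n + 1) * x)) * bd ^ (n + 1) := (S0 (n + 1)).mulR _
      _ = μ ^ (n + 1) • (b ^ (n + 1) * (x * bd ^ (n + 1))) := by
          rw [smul_mul_assoc, mul_assoc]
      _ ≋ μ ^ (n + 1) • ((b ^ (n + 1 + (n + 1)) * bd ^ (n + 1)) * (x * bd ^ (n + 1))) :=
          (((S1 (n + 1)).mulR _)).smul _
      _ = μ ^ (n + 1) • (b ^ (n + 1 + (n + 1)) * ((bd ^ (n + 1) * x) * bd ^ (n + 1))) := by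
          simp only [mul_assoc]
      _ ≋ μ ^ (n + 1) •
          (b ^ (n + 1 + (n + 1)) * ((μ ^ (n + 1) • (e * (x * bd ^ (n + 1)))) * bd ^ (n + 1))) :=
          (((S4 n).mulR _).mulL _).smul _
      _ = μ ^ ((n + 1) + (n + 1)) • (b ^ ((n + 1) + (n + 1)) * ((e * x) * bd ^ ((n + 1) + (n + 1)))) := by
          simp only [smul_mul_assoc, mul_smul_comm, smul_smul, mul_assoc, ← pow_add]
      _ ≋ e * x := c6.symm
  -- S8
  have S8 : Jr (bd * x) (μ • (x * bd)) := by
    refine S3.trans ?_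
    have h1 := ((S7.symm).mulR bd).smul μ
    refine (Jr.of_eq ?_).trans (h1.trans (Jr.of_eq ?_))
    · rw [mul_assoc]
    · rw [mul_assoc, he_bd]
  exact ⟨by rw [← he]; exact S7, S8⟩

end Aux

local infix:50 " ≋ " => Jr

open scoped ENNReal NNReal

theorem stmt18 {A : Type*} [NormedRing A] [NormedAlgebra ℂ A] [CompleteSpace A]
    (a ad b bd : A) (ha : IsPDrazinInv a ad) (hb : IsPDrazinInv b bd)
    (lam : ℂ) (hlam : lam ≠ 0) (h : a * b = lam • (b * a)) :
    IsUnit (1 + bd * (a * (1 - a * ad))) ∧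
      (1 + bd * (a * (1 - a * ad))) * (∑' i : ℕ, (-(bd * (a * (1 - a * ad)))) ^ i) = 1 ∧
      (∑' i : ℕ, (-(bd * (a * (1 - a * ad)))) ^ i) * (1 + bd * (a * (1 - a * ad))) = 1 := by
  obtain ⟨hac, hai, k, hk1, hk⟩ := ha
  obtain ⟨hbc, hbi, m, hm1, hm⟩ := hb
  obtain ⟨k', rfl⟩ : ∃ k'', k = k'' + 1 := ⟨k - 1, by omega⟩
  obtain ⟨f, hf⟩ : ∃ f : A, f = a * ad := ⟨_, rfl⟩
  obtain ⟨p, hp⟩ : ∃ p : A, p = a * (1 - a * ad) := ⟨_, rfl⟩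
  obtain ⟨q, hq⟩ : ∃ q : A, q = bd * p := ⟨_, rfl⟩
  rw [show bd * (a * (1 - a * ad)) = q from by rw [hq, hp]]
  have hfa : a * f = f * a := by rw [hf, hac, ← mul_assoc, hac]
  have hff : f * f = f := by rw [hf, mul_assoc, ← mul_assoc ad a ad, hai]
  -- key commutation lemmas mod the radical
  have K1 := keyM b bd a lam hlam hbc hbi m hm1 hm (Jr.of_eq h)
  have hba : b * a = lam⁻¹ • (a * b) := by
    rw [h, smul_smul, inv_mul_cancel₀ hlam, one_smul]
  have K2 := keyM a ad b lam⁻¹ (inv_ne_zero hlam) hac hai (k' + 1) hk1 hk (Jr.of_eq hba)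
  have hfb : Jr (f * b) ((1 : ℂ) • (b * f)) := by
    rw [hf, one_smul]
    exact K2.1.symm
  have K3 := keyM b bd f 1 one_ne_zero hbc hbi m hm1 hm hfb
  have D1 : Jr (bd * a) (lam • (a * bd)) := K1.2
  have D3 : Jr (bd * f) (f * bd) := by have := K3.2; rwa [one_smul] at this
  -- D4 : bd * p ≈ lam • (p * bd)
  have D4 : Jr (bd * p) (lam • (p * bd)) := by
    calc bd * p = (bd * a) * (1 - f) := by rw [hp, hf, ← mul_assoc]
      _ ≋ (lam • (a * bd)) * (1 - f) := D1.mulR _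
      _ = lam • (a * (bd - bd * f)) := by rw [smul_mul_assoc, mul_assoc, mul_one_sub]
      _ ≋ lam • (a * (bd - f * bd)) := ((D3.subL bd).mulL a).smul lam
      _ = lam • (p * bd) := by rw [hp, mul_assoc, one_sub_mul, hf]
  have D5 : Jr (p * bd) (lam⁻¹ • (bd * p)) := by
    have h2 := (D4.symm).smul lam⁻¹
    refine (Jr.of_eq ?_).trans h2
    rw [smul_smul, inv_mul_cancel₀ hlam, one_smul]
  have D6 : ∀ j : ℕ, Jr (p ^ j * bd) ((lam⁻¹) ^ j • (bd * p ^ j)) := by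
    intro j; induction j with
    | zero => exact Jr.of_eq (by simp)
    | succ i ih =>
      calc p ^ (i + 1) * bd = p * (p ^ i * bd) := by rw [pow_succ' p i, mul_assoc]
        _ ≋ p * ((lam⁻¹) ^ i • (bd * p ^ i)) := ih.mulL p
        _ = (lam⁻¹) ^ i • ((p * bd) * p ^ i) := by rw [mul_smul_comm, ← mul_assoc]
        _ ≋ (lam⁻¹) ^ i • ((lam⁻¹ • (bd * p)) * p ^ i) := (D5.mulR _).smul _
        _ = (lam⁻¹) ^ (i + 1) • (bd * p ^ (i + 1)) := by
            rw [smul_mul_assoc, smul_smul, ← pow_succ, pow_succ' p i]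
            congr 1
            rw [mul_assoc]
  have D7 : ∀ j : ℕ, ∃ c : ℂ, Jr (q ^ j) (c • (bd ^ j * p ^ j)) := by
    intro j; induction j with
    | zero => exact ⟨1, Jr.of_eq (by simp)⟩
    | succ i ih =>
      obtain ⟨c, hc⟩ := ih
      refine ⟨c * (lam⁻¹) ^ i, ?_⟩
      calc q ^ (i + 1) = q ^ i * q := pow_succ q i
        _ ≋ (c • (bd ^ i * p ^ i)) * q := hc.mulR q
        _ = c • (bd ^ i * ((p ^ i * bd) * p)) := by
            rw [hq, smul_mul_assoc]
            congr 1
            simp only [mul_assoc]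
        _ ≋ c • (bd ^ i * (((lam⁻¹) ^ i • (bd * p ^ i)) * p)) :=
            (((D6 i).mulR p).mulL _).smul c
        _ = (c * (lam⁻¹) ^ i) • (bd ^ (i + 1) * p ^ (i + 1)) := by
            rw [pow_succ bd i, pow_succ p i]
            simp only [smul_mul_assoc, mul_smul_comm, smul_smul, mul_assoc]
  -- D8 : p ^ k ∈ J
  have hcomf : Commute a (1 - f) := (Commute.one_right a).sub_right hfa
  have D8 : MemJacobson (p ^ (k' + 1)) := by
    have hpk : p ^ (k' + 1) = a ^ (k' + 1) - a ^ (k' + 1 + 1) * ad := by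
      rw [hp, ← hf]
      rw [hcomf.mul_pow, IsIdempotentElem.pow_succ_eq k' (IsIdempotentElem.one_sub hff),
        mul_one_sub, hf, ← mul_assoc, ← pow_succ]
    rw [hpk]; exact hk
  -- D9 : q ^ k ∈ J
  have D9 : MemJacobson (q ^ (k' + 1)) := by
    obtain ⟨c, hc⟩ := D7 (k' + 1)
    have h1 : MemJacobson (c • (bd ^ (k' + 1) * p ^ (k' + 1))) :=
      MemJacobson.smul' c (D8.mul_left _)
    have h2 := MemJacobson.add hc h1
    rwa [sub_add_cancel] at h2
  -- spectrum of -q is {0}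
  have hyk : MemJacobson ((-q) ^ (k' + 1)) := by
    rw [neg_pow]
    exact D9.mul_left _
  have hspec : spectrum ℂ (-q) ⊆ {0} := by
    intro z hz
    simp only [Set.mem_singleton_iff]
    by_contra hz0
    have hK : (z ^ (k' + 1) : ℂ) ≠ 0 := pow_ne_zero _ hz0
    have hunit1 : IsUnit (1 - (z ^ (k' + 1))⁻¹ • (-q) ^ (k' + 1)) := by
      have := hyk ((z ^ (k' + 1))⁻¹ • (1 : A))
      rwa [smul_mul_assoc, one_mul] at this
    have hsmul_unit : IsUnit ((z ^ (k' + 1)) • (1 : A)) := by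
      refine ⟨⟨(z ^ (k' + 1)) • (1 : A), (z ^ (k' + 1))⁻¹ • (1 : A), ?_, ?_⟩, rfl⟩
      · rw [smul_mul_assoc, one_mul, smul_smul, mul_inv_cancel₀ hK, one_smul]
      · rw [smul_mul_assoc, one_mul, smul_smul, inv_mul_cancel₀ hK, one_smul]
    have hunit2 : IsUnit ((z ^ (k' + 1)) • (1 : A) - (-q) ^ (k' + 1)) := by
      have heq : (z ^ (k' + 1)) • (1 : A) - (-q) ^ (k' + 1) =
          ((z ^ (k' + 1)) • (1 : A)) * (1 - (z ^ (k' + 1))⁻¹ • (-q) ^ (k' + 1)) := by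
        rw [mul_one_sub, smul_mul_assoc, one_mul, smul_smul, mul_inv_cancel₀ hK, one_smul]
      rw [heq]
      exact hsmul_unit.mul hunit1
    have hcq : Commute ((z : ℂ) • (1 : A)) (-q) := by
      show (z • (1 : A)) * (-q) = (-q) * (z • (1 : A))
      rw [smul_mul_assoc, one_mul, mul_smul_comm, mul_one]
    have hfac1 := hcq.geom_sum₂_mul (k' + 1)
    have hfac2 := hcq.mul_geom_sum₂ (k' + 1)
    have hzK1 : ((z : ℂ) • (1 : A)) ^ (k' + 1) = (z ^ (k' + 1)) • (1 : A) := by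
      rw [smul_pow, one_pow]
    rw [hzK1] at hfac1 hfac2
    have hD : IsUnit ((z : ℂ) • (1 : A) - (-q)) := by
      refine isUnit_of_both (s := ∑ i ∈ Finset.range (k' + 1),
        ((z : ℂ) • (1 : A)) ^ i * (-q) ^ (k' + 1 - 1 - i)) ?_ ?_
      · rw [hfac1]; exact hunit2
      · rw [hfac2]; exact hunit2
    exact (spectrum.mem_iff.mp hz) (by rwa [Algebra.algebraMap_eq_smul_one])
  -- spectral radius zero
  have hrad : spectralRadius ℂ (-q) = 0 := by
    refine le_antisymm ?_ zero_le
    rw [spectralRadius]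
    refine iSup₂_le ?_
    intro z hz
    have := hspec hz
    simp only [Set.mem_singleton_iff] at this
    subst this
    simp
  -- Gelfand and summability
  have hgel := spectrum.pow_nnnorm_pow_one_div_tendsto_nhds_spectralRadius (-q)
  rw [hrad] at hgel
  have hev : ∀ᶠ n : ℕ in Filter.atTop, (‖(-q) ^ n‖₊ : ℝ≥0∞) ^ (1 / (n : ℝ)) < 2⁻¹ :=
    hgel.eventually_lt_const (by norm_num)
  obtain ⟨N, hN⟩ := Filter.eventually_atTop.mp hev
  set M := max N 1 with hM
  have hbound : ∀ n : ℕ, ‖(-q) ^ (n + M)‖ ≤ (2⁻¹ : ℝ) ^ (n + M) := by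
    intro n
    have hn1 : (1 : ℕ) ≤ n + M := le_trans (le_max_right N 1) (Nat.le_add_left M n)
    have hnN : N ≤ n + M := le_trans (le_max_left N 1) (Nat.le_add_left M n)
    have h1 := hN (n + M) hnN
    have hc0 : (0 : ℝ) < ((n + M : ℕ) : ℝ) := by positivity
    have h2 : (‖(-q) ^ (n + M)‖₊ : ℝ≥0∞) ≤ (2⁻¹ : ℝ≥0∞) ^ (n + M) := by
      have h3 : (‖(-q) ^ (n + M)‖₊ : ℝ≥0∞) =
          ((‖(-q) ^ (n + M)‖₊ : ℝ≥0∞) ^ (1 / ((n + M : ℕ) : ℝ))) ^ (((n + M : ℕ) : ℝ)) := by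
        rw [← ENNReal.rpow_mul, one_div, inv_mul_cancel₀ (ne_of_gt hc0), ENNReal.rpow_one]
      calc (‖(-q) ^ (n + M)‖₊ : ℝ≥0∞)
          = ((‖(-q) ^ (n + M)‖₊ : ℝ≥0∞) ^ (1 / ((n + M : ℕ) : ℝ))) ^ (((n + M : ℕ) : ℝ)) := h3
        _ ≤ (2⁻¹ : ℝ≥0∞) ^ (((n + M : ℕ) : ℝ)) := ENNReal.rpow_le_rpow h1.le hc0.le
        _ = (2⁻¹ : ℝ≥0∞) ^ (n + M) := ENNReal.rpow_natCast _ _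
    have h4 := ENNReal.toReal_mono (by simp [ENNReal.pow_ne_top]) h2
    simpa using h4
  have hsumnorm : Summable (fun n : ℕ => ‖(-q) ^ n‖) := by
    rw [← summable_nat_add_iff M]
    refine Summable.of_nonneg_of_le (fun n => norm_nonneg _) hbound ?_
    have hgeo : Summable (fun n : ℕ => (2⁻¹ : ℝ) ^ n) :=
      summable_geometric_of_lt_one (by norm_num) (by norm_num)
    have := hgeo.mul_right ((2⁻¹ : ℝ) ^ M)
    simpa [pow_add] using this
  have hsum : Summable (fun n : ℕ => (-q) ^ n) := Summable.of_norm hsumnorm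
  -- geometric series identities
  have hT : ∑' n : ℕ, (-q) ^ (n + 1) = (∑' n : ℕ, (-q) ^ n) - 1 := by
    have h0 := Summable.tsum_eq_zero_add hsum
    rw [pow_zero] at h0
    rw [h0, add_sub_cancel_left]
  have hMul1 : (-q) * (∑' n : ℕ, (-q) ^ n) = ∑' n : ℕ, (-q) ^ (n + 1) := by
    have h2 := (hsum.hasSum.mul_left (-q)).tsum_eq
    rw [← h2]
    exact tsum_congr fun n => by rw [pow_succ']
  have hMul2 : (∑' n : ℕ, (-q) ^ n) * (-q) = ∑' n : ℕ, (-q) ^ (n + 1) := by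
    have h2 := (hsum.hasSum.mul_right (-q)).tsum_eq
    rw [← h2]
    exact tsum_congr fun n => by rw [pow_succ]
  have e1 : (1 + q) * (∑' n : ℕ, (-q) ^ n) = 1 := by
    have h2 : (1 + q) * (∑' n : ℕ, (-q) ^ n) =
        (∑' n : ℕ, (-q) ^ n) - (-q) * (∑' n : ℕ, (-q) ^ n) := by noncomm_ring
    rw [h2, hMul1, hT, sub_sub_cancel]
  have e2 : (∑' n : ℕ, (-q) ^ n) * (1 + q) = 1 := by
    have h2 : (∑' n : ℕ, (-q) ^ n) * (1 + q) =
        (∑' n : ℕ, (-q) ^ n) - (∑' n : ℕ, (-q) ^ n) * (-q) := by noncomm_ring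
    rw [h2, hMul2, hT, sub_sub_cancel]
  exact ⟨⟨⟨1 + q, ∑' n : ℕ, (-q) ^ n, e1, e2⟩, rfl⟩, e1, e2⟩
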